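/- arXiv:1203.4465 — 3 statements merged into one kernel-verified Lean document; each statement's English description precedes it below -/
import Mathlib

section
/- Suppose a family of linear operators D_J on a module, indexed by compositions J of positive integers, satisfies D_I ∘ D_J = D_{I⊞J} + D_{I⊡J} for all compositions I, J, where I ⊞ J merges the last part of I with the first part of J and I ⊡ J is concatenation. Then for any composition I = [i_1,...,i_r], the composition of the single-part operators satisfies D_{[i_1]} ∘ D_{[i_2]} ∘ ⋯ ∘ D_{[i_r]} = Σ_{J ⪯ I} D_J, where the sum is over all compositions J coarser than I (obtained from I by merging consecutive parts). -/
/-!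
STATEMENT 2: If a family of linear operators `D_J` indexed by compositions satisfies
`D_I ∘ D_J = D_{I⊞J} + D_{I⊡J}`, then `D_{[i_1]} ∘ ⋯ ∘ D_{[i_r]} = Σ_{J ⪯ I} D_J`.
-/

/-- `I ⊡ J`: concatenation. -/
def boxdot (I J : List ℕ) : List ℕ := I ++ J

/-- `I ⊞ J`: merge the last part of `I` with the first part of `J`. -/
def boxplus (I J : List ℕ) : List ℕ :=
  match J with
  | [] => I
  | j :: js => I.dropLast ++ (I.getLastD 0 + j) :: js

/-- `coarsen J I`: `J ⪯ I`, i.e. `J` is obtained from `I` by summing consecutive runs. -/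
def coarsen (J I : List ℕ) : Prop :=
  ∃ P : List (List ℕ), (∀ p ∈ P, p ≠ []) ∧ P.flatten = I ∧ P.map List.sum = J

lemma boxplus_single (i j : ℕ) (js : List ℕ) :
    boxplus [i] (j :: js) = (i + j) :: js := by
  simp [boxplus]

def coarsF : List ℕ → List (List ℕ)
  | [] => [[]]
  | [i] => [[i]]
  | i :: j :: t =>
      ((coarsF (j :: t)).map (fun J => i :: J)) ++
      ((coarsF (j :: t)).map (fun J => boxplus [i] J))

lemma coarsF_props : ∀ (I : List ℕ), I ≠ [] → (∀ i ∈ I, 0 < i) →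
    ∀ J ∈ coarsF I, J ≠ [] ∧ (∀ j ∈ J, 0 < j) := by
  intro I
  induction I with
  | nil => simp
  | cons i I ih =>
    intro _ hpos J hJ
    match I, hJ with
    | [], hJ =>
      simp [coarsF] at hJ
      subst hJ
      refine ⟨by simp, ?_⟩
      simpa using hpos
    | j :: t, hJ =>
      rw [coarsF, List.mem_append] at hJ
      have hpos' : ∀ x ∈ j :: t, 0 < x := fun x hx => hpos x (List.mem_cons_of_mem _ hx)
      rcases hJ with hJ | hJ
      · rcases List.mem_map.mp hJ with ⟨K, hK, rfl⟩
        obtain ⟨hK1, hK2⟩ := ih (by simp) hpos' K hK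
        refine ⟨by simp, ?_⟩
        intro x hx
        rcases List.mem_cons.mp hx with rfl | hx
        · exact hpos x (by simp)
        · exact hK2 x hx
      · rcases List.mem_map.mp hJ with ⟨K, hK, rfl⟩
        obtain ⟨hK1, hK2⟩ := ih (by simp) hpos' K hK
        match K, hK1 with
        | k :: ks, _ =>
          rw [boxplus_single]
          refine ⟨by simp, ?_⟩
          intro x hx
          rcases List.mem_cons.mp hx with rfl | hx
          · have := hK2 k (by simp); omega
          · exact hK2 x (List.mem_cons_of_mem _ hx)

lemma flatten_nil_of_ne (P : List (List ℕ)) (h : ∀ p ∈ P, p ≠ []) (hf : P.flatten = []) :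
    P = [] := by
  cases P with
  | nil => rfl
  | cons p P =>
    simp only [List.flatten_cons, List.append_eq_nil_iff] at hf
    exact absurd hf.1 (h p (by simp))

lemma mem_coarsF_iff : ∀ (I : List ℕ), I ≠ [] → ∀ J, (coarsen J I ↔ J ∈ coarsF I) := by
  intro I
  induction I with
  | nil => simp
  | cons i I ih =>
    intro _ J
    constructor
    · rintro ⟨P, hne, hflat, rfl⟩
      cases P with
      | nil => simp at hflat
      | cons p P =>
        cases p with
        | nil => exact absurd rfl (hne [] (by simp))
        | cons x p' =>
          have hflat' : x = i ∧ p' ++ P.flatten = I := by simpa using hflat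
          obtain ⟨rfl, hflat'⟩ := hflat'
          cases I with
          | nil =>
            have hp' : p' = [] := by
              cases p' with
              | nil => rfl
              | cons a b => simp at hflat'
            subst hp'
            have hP : P = [] := flatten_nil_of_ne P (fun q hq => hne q (by simp [hq]))
              (by simpa using hflat')
            subst hP
            simp [coarsF]
          | cons y t =>
            by_cases hp' : p' = []
            · subst hp'
              simp only [List.nil_append] at hflat'
              have hmem : (P.map List.sum) ∈ coarsF (y :: t) :=
                (ih (by simp) _).mp ⟨P, fun q hq => hne q (by simp [hq]), hflat', rfl⟩
              rw [coarsF]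
              apply List.mem_append_left
              simp only [List.map_cons, List.sum_cons, List.sum_nil]
              exact List.mem_map.mpr ⟨P.map List.sum, hmem, by simp⟩
            · have hmem : ((p' :: P).map List.sum) ∈ coarsF (y :: t) :=
                (ih (by simp) _).mp ⟨p' :: P, by
                  intro q hq
                  rcases List.mem_cons.mp hq with rfl | hq
                  · exact hp'
                  · exact hne q (by simp [hq]), by simpa using hflat', rfl⟩
              rw [coarsF]
              apply List.mem_append_right
              refine List.mem_map.mpr ⟨(p' :: P).map List.sum, hmem, ?_⟩
              simp [boxplus_single, List.sum_cons]
    · intro hJ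
      match I, hJ with
      | [], hJ =>
        simp [coarsF] at hJ
        subst hJ
        exact ⟨[[i]], by simp, by simp, by simp⟩
      | y :: t, hJ =>
        rw [coarsF, List.mem_append] at hJ
        rcases hJ with hJ | hJ
        · rcases List.mem_map.mp hJ with ⟨K, hK, rfl⟩
          obtain ⟨P, hne, hflat, rfl⟩ := (ih (by simp) K).mpr hK
          exact ⟨[i] :: P, by
            intro q hq
            rcases List.mem_cons.mp hq with rfl | hq
            · simp
            · exact hne q hq, by simp [hflat], by simp⟩
        · rcases List.mem_map.mp hJ with ⟨K, hK, rfl⟩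
          obtain ⟨P, hne, hflat, rfl⟩ := (ih (by simp) K).mpr hK
          cases P with
          | nil => simp at hflat
          | cons p P =>
            refine ⟨(i :: p) :: P, ?_, ?_, ?_⟩
            · intro q hq
              rcases List.mem_cons.mp hq with rfl | hq
              · simp
              · exact hne q (by simp [hq])
            · simpa using hflat
            · simp [boxplus_single, List.sum_cons]

lemma coarsF_nodup : ∀ (I : List ℕ), I ≠ [] → (∀ i ∈ I, 0 < i) → (coarsF I).Nodup := by
  intro I
  induction I with
  | nil => simp
  | cons i I ih =>
    intro _ hpos
    match I with
    | [] => simp [coarsF]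
    | y :: t =>
      rw [coarsF]
      have hpos' : ∀ x ∈ y :: t, 0 < x := fun x hx => hpos x (List.mem_cons_of_mem _ hx)
      have hnd := ih (by simp) hpos'
      have hprops := coarsF_props (y :: t) (by simp) hpos'
      refine List.Nodup.append ?_ ?_ ?_
      · exact List.Nodup.map (fun a b h => by simpa using h) hnd
      · refine List.Nodup.map_on ?_ hnd
        intro a ha b hb hab
        obtain ⟨ha1, -⟩ := hprops a ha
        obtain ⟨hb1, -⟩ := hprops b hb
        match a, ha1, b, hb1 with
        | x :: xs, _, z :: zs, _ =>
          rw [boxplus_single, boxplus_single] at hab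
          simp only [List.cons.injEq] at hab ⊢
          exact ⟨by omega, hab.2⟩
      · intro a ha hb
        rcases List.mem_map.mp ha with ⟨K, hK, rfl⟩
        rcases List.mem_map.mp hb with ⟨L, hL, hLa⟩
        obtain ⟨hL1, hL2⟩ := hprops L hL
        match L, hL1 with
        | l :: ls, _ =>
          rw [boxplus_single] at hLa
          have hl := hL2 l (by simp)
          simp only [List.cons.injEq] at hLa
          obtain ⟨h1, -⟩ := hLa
          omega
lemma prod_eq {R M : Type*} [CommRing R] [AddCommGroup M] [Module R M]
    (D : List ℕ → Module.End R M)
    (hD : ∀ I J : List ℕ, I ≠ [] → J ≠ [] → (∀ i ∈ I, 0 < i) → (∀ j ∈ J, 0 < j) →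
      D I * D J = D (boxplus I J) + D (boxdot I J)) :
    ∀ (I : List ℕ), I ≠ [] → (∀ i ∈ I, 0 < i) →
      (I.map fun i => D [i]).prod = ((coarsF I).map D).sum := by
  intro I
  induction I with
  | nil => simp
  | cons i I ih =>
    intro _ hpos
    match I with
    | [] => simp [coarsF]
    | y :: t =>
      have hpos' : ∀ x ∈ y :: t, 0 < x := fun x hx => hpos x (List.mem_cons_of_mem _ hx)
      have hprops := coarsF_props (y :: t) (by simp) hpos'
      have hi : 0 < i := hpos i (by simp)
      calc ((i :: y :: t).map fun n => D [n]).prod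
          = D [i] * (((y :: t).map fun n => D [n]).prod) := by simp
        _ = D [i] * ((coarsF (y :: t)).map D).sum := by rw [ih (by simp) hpos']
        _ = ((coarsF (y :: t)).map fun J => D [i] * D J).sum := by
            rw [← List.sum_map_mul_left]
        _ = ((coarsF (y :: t)).map fun J => D (boxplus [i] J) + D (boxdot [i] J)).sum := by
            congr 1
            refine List.map_congr_left ?_
            intro J hJ
            obtain ⟨hJ1, hJ2⟩ := hprops J hJ
            exact hD [i] J (by simp) hJ1 (by simpa using hi) hJ2
        _ = ((coarsF (i :: y :: t)).map D).sum := by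
            rw [coarsF, List.map_append, List.sum_append, List.map_map, List.map_map]
            rw [List.sum_map_add]
            rw [add_comm]
            congr 1

theorem stmt2 {R M : Type*} [CommRing R] [AddCommGroup M] [Module R M]
    (D : List ℕ → Module.End R M)
    (hD : ∀ I J : List ℕ, I ≠ [] → J ≠ [] → (∀ i ∈ I, 0 < i) → (∀ j ∈ J, 0 < j) →
      D I * D J = D (boxplus I J) + D (boxdot I J))
    (I : List ℕ) (hI : I ≠ []) (hpos : ∀ i ∈ I, 0 < i) :
    (I.map fun i => D [i]).prod = ∑ᶠ J ∈ {J : List ℕ | coarsen J I}, D J := by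
  have hset : {J : List ℕ | coarsen J I} = ↑(coarsF I).toFinset := by
    ext J
    simp [mem_coarsF_iff I hI J]
  rw [hset, finsum_mem_coe_finset, List.sum_toFinset _ (coarsF_nodup I hI hpos)]
  exact prod_eq D hD I hI hpos
end

section
/- Let A be an algebra with a subalgebra B spanned by products h_{j_1}⋯h_{j_l} of commuting generators h_j = U_j(1), where U_j is left multiplication by h_j. Suppose the D_i are linear operators on A satisfying the bracket relation D_i∘U_j = U_j∘D_i + D_{i−1}∘U_{j−1}, D_0 = id, D_1(B) ⊆ B, and D_i(h_r) = h_{r−i}. Then D_i(B) ⊆ B for all i ≥ 0. -/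
/-!
STATEMENT 5: Let `A` be an algebra, `h_0 = 1, h_1, ..., h_k` pairwise commuting elements,
`B` the subalgebra they generate (spanned by the products `h_{j_1} ⋯ h_{j_l}`), `U_j`
left multiplication by `h_j`, and `D_i` linear operators with `D_0 = id` satisfying the
bracket relation `D_i ∘ U_j = U_j ∘ D_i + D_{i−1} ∘ U_{j−1}`, `D_1(B) ⊆ B`, and
`D_i(h_r) = h_{r−i}` (with `h_m = 0` for `m < 0`).  Then `D_i(B) ⊆ B` for all `i ≥ 0`.
-/

theorem stmt5 {R A : Type*} [CommRing R] [Ring A] [Algebra R A] (k : ℕ)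
    (h : ℕ → A) (hzero : h 0 = 1)
    (hcommute : ∀ i j, h i * h j = h j * h i)
    (U D : ℕ → Module.End R A)
    (hU : ∀ j x, U j x = h j * x)
    (hD0 : D 0 = 1)
    (hbracket : ∀ i j, 1 ≤ i → 1 ≤ j →
      D i * U j = U j * D i + D (i - 1) * U (j - 1))
    (B : Submodule R A)
    (hB : B = Submodule.span R
      {x | ∃ L : List ℕ, (∀ j ∈ L, j ≤ k) ∧ x = (L.map h).prod})
    (hD1 : ∀ b ∈ B, D 1 b ∈ B)
    (hDh : ∀ i r, r ≤ k →
      (i ≤ r → D i (h r) = h (r - i)) ∧ (r < i → D i (h r) = 0)) :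
    ∀ i, ∀ b ∈ B, D i b ∈ B := by

  have hmul : ∀ j, j ≤ k → ∀ b ∈ B, h j * b ∈ B := by
    intro j hj b hb
    rw [hB] at hb ⊢
    induction hb using Submodule.span_induction with
    | mem x hx =>
      obtain ⟨L, hL, rfl⟩ := hx
      refine Submodule.subset_span ⟨j :: L, ?_, by simp⟩
      intro m hm
      rcases List.mem_cons.1 hm with hm | hm
      · exact hm ▸ hj
      · exact hL m hm
    | zero => simp
    | add x y _ _ hx hy => rw [mul_add]; exact add_mem hx hy
    | smul r x _ hx => rw [mul_smul_comm]; exact Submodule.smul_mem _ _ hx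
  intro i
  induction i with
  | zero => intro b hb; rw [hD0]; simpa using hb
  | succ n ih =>
    have key : ∀ L : List ℕ, (∀ j ∈ L, j ≤ k) → D (n+1) ((L.map h).prod) ∈ B := by
      intro L
      induction L with
      | nil =>
        intro _
        simp only [List.map_nil, List.prod_nil]
        rw [← hzero, (hDh (n+1) 0 (Nat.zero_le k)).2 (Nat.succ_pos n)]
        exact zero_mem _
      | cons j L ihL =>
        intro hL
        have hLtail : ∀ m ∈ L, m ≤ k := fun m hm => hL m (List.mem_cons_of_mem _ hm)
        have hj : j ≤ k := hL j List.mem_cons_self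
        simp only [List.map_cons, List.prod_cons]
        cases j with
        | zero => rw [hzero, one_mul]; exact ihL hLtail
        | succ m =>
          have hb := hbracket (n+1) (m+1) (Nat.le_add_left 1 n) (Nat.le_add_left 1 m)
          simp only [Nat.add_sub_cancel] at hb
          have happ := LinearMap.congr_fun hb ((L.map h).prod)
          simp only [Module.End.mul_apply, LinearMap.add_apply, hU] at happ
          rw [happ]
          refine add_mem (hmul (m+1) hj _ (ihL hLtail)) ?_
          have hgen : h m * (L.map h).prod ∈ B := by
            rw [hB]
            refine Submodule.subset_span ⟨m :: L, ?_, by simp⟩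
            intro x hx
            rcases List.mem_cons.1 hx with hx | hx
            · exact hx ▸ (Nat.le_of_succ_le hj)
            · exact hLtail x hx
          exact ih _ hgen
    intro b hb
    rw [hB] at hb
    induction hb using Submodule.span_induction with
    | mem x hx =>
      obtain ⟨L, hL, rfl⟩ := hx
      exact key L hL
    | zero => simp
    | add x y _ _ hx hy => rw [map_add]; exact add_mem hx hy
    | smul r x _ hx => rw [map_smul]; exact Submodule.smul_mem _ _ hx
end

section
/- In the affine symmetric group W realized as permutations w: ℤ → ℤ with w(i + k + 1) = w(i) + k + 1 and Σ_{i=1}^{k+1} w(i) = Σ_{i=1}^{k+1} i, for each D ⊊ {0,1,...,k} there exists a unique cyclically decreasing element w_D whose support (set of simple reflections appearing in a reduced word) is exactly {s_d : d ∈ D}, and ℓ(w_D) = |D|. -/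
/-!
STATEMENT 17: In the affine symmetric group `W` of type `A_k^{(1)}` (presented as a
Coxeter group; it is isomorphic to the group of permutations `w : ℤ → ℤ` with
`w(i+k+1) = w(i)+k+1` and `Σ_{i=1}^{k+1} w(i) = Σ_{i=1}^{k+1} i`), for every proper
subset `D ⊊ {0, 1, ..., k}` there is a unique cyclically decreasing element `w_D` whose
support (set of letters in a reduced word) is exactly `D`, and `ℓ(w_D) = |D|`.
A word is cyclically decreasing if each letter occurs at most once and whenever both
`s_m` and `s_{m+1}` (indices mod `k+1`) occur, `s_{m+1}` precedes `s_m`.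
-/

/-- The Coxeter matrix of affine type `A_k^{(1)}` (for `k ≥ 2`). -/
def affCM (k : ℕ) (hk : 2 ≤ k) : CoxeterMatrix (Fin (k + 1)) where
  M := Matrix.of fun i j => if i = j then 1 else if i = j + 1 ∨ j = i + 1 then 3 else 2
  isSymm := by
    ext i j
    simp only [Matrix.transpose_apply, Matrix.of_apply]
    by_cases h : i = j
    · subst h; simp
    · rw [if_neg h, if_neg (Ne.symm h)]
      by_cases h2 : j = i + 1 ∨ i = j + 1
      · rw [if_pos h2, if_pos h2.symm]
      · rw [if_neg h2, if_neg fun hc => h2 hc.symm]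
  diagonal i := by simp
  off_diagonal i j hij := by
    simp only [Matrix.of_apply, if_neg hij]
    split <;> omega

namespace Stmt17Aux

lemma dvd_small {n d : ℤ} (hn : 0 < n) (h : n ∣ d) (h1 : -n < d) (h2 : d < n) : d = 0 :=
  Int.eq_zero_of_abs_lt_dvd h (abs_lt.mpr ⟨h1, h2⟩)

lemma dvd_comb {n a b : ℤ} (h1 : n ∣ a) (h2 : n ∣ b) (u v : ℤ) {c : ℤ}
    (e : c = u * a + v * b) : n ∣ c := by
  subst e; exact dvd_add (Dvd.dvd.mul_left h1 u) (Dvd.dvd.mul_left h2 v)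

lemma not_dvd_near {n d e : ℤ} (hd : n ∣ d) (h1 : d - n < e) (h2 : e < d + n) (hne : e ≠ d) :
    ¬ n ∣ e := by
  intro he
  have h3 : n ∣ e - d := dvd_sub he hd
  have hn : 0 < n := by
    rcases lt_trichotomy 0 n with h | h | h
    · exact h
    · omega
    · omega
  have := dvd_small hn h3 (by omega) (by omega)
  omega

/-- the building block: the affine transposition swapping `i + m*n` with `i+1+m*n`. -/
def gfun (n i : ℤ) (x : ℤ) : ℤ :=
  if n ∣ (x - i) then x + 1 else if n ∣ (x - i - 1) then x - 1 else x

lemma gfun_up {n i x : ℤ} (h : n ∣ (x - i)) : gfun n i x = x + 1 := by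
  simp [gfun, h]

lemma gfun_down {n i x : ℤ} (hn : 2 ≤ n) (h : n ∣ (x - i - 1)) : gfun n i x = x - 1 := by
  have h0 : ¬ n ∣ (x - i) := not_dvd_near h (by omega) (by omega) (by omega)
  simp [gfun, h, h0]

lemma gfun_fix {n i x : ℤ} (h0 : ¬ n ∣ (x - i)) (h1 : ¬ n ∣ (x - i - 1)) : gfun n i x = x := by
  simp [gfun, h0, h1]

lemma gfun_invol (n i : ℤ) (hn : 2 ≤ n) (x : ℤ) : gfun n i (gfun n i x) = x := by
  by_cases h0 : n ∣ (x - i)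
  · rw [gfun_up h0, gfun_down hn (dvd_comb h0 h0 1 0 (by ring))]; omega
  · by_cases h1 : n ∣ (x - i - 1)
    · rw [gfun_down hn h1, gfun_up (dvd_comb h1 h1 1 0 (by ring) : n ∣ x - 1 - i)]; omega
    · rw [gfun_fix h0 h1, gfun_fix h0 h1]

lemma gfun_congr {n i i' : ℤ} (h : n ∣ (i - i')) (x : ℤ) : gfun n i x = gfun n i' x := by
  unfold gfun
  have e1 : n ∣ (x - i) ↔ n ∣ (x - i') := by
    constructor <;> intro hd
    · exact dvd_comb hd h 1 1 (by ring)
    · exact dvd_comb hd h 1 (-1) (by ring)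
  have e2 : n ∣ (x - i - 1) ↔ n ∣ (x - i' - 1) := by
    constructor <;> intro hd
    · exact dvd_comb hd h 1 1 (by ring)
    · exact dvd_comb hd h 1 (-1) (by ring)
  rw [if_congr e1 rfl rfl, if_congr e2 rfl rfl]

lemma gfun_comm {n i j : ℤ} (hn : 2 ≤ n) (hij : ¬ n ∣ (i - j)) (hij1 : ¬ n ∣ (i - j - 1))
    (hji1 : ¬ n ∣ (j - i - 1)) (x : ℤ) : gfun n i (gfun n j x) = gfun n j (gfun n i x) := by
  by_cases h0 : n ∣ (x - i)
  · have f1 : ¬ n ∣ (x - j) := fun h => hij (dvd_comb h0 h (-1) 1 (by ring))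
    have f2 : ¬ n ∣ (x - j - 1) := fun h => hij1 (dvd_comb h0 h (-1) 1 (by ring))
    have f3 : ¬ n ∣ (x + 1 - j) := fun h => hji1 (dvd_comb h0 h 1 (-1) (by ring))
    have f4 : ¬ n ∣ (x + 1 - j - 1) := fun h => hij (dvd_comb h0 h (-1) 1 (by ring))
    rw [gfun_fix f1 f2, gfun_up h0, gfun_fix f3 f4]
  · by_cases h1 : n ∣ (x - i - 1)
    · have f1 : ¬ n ∣ (x - j) := fun h => hji1 (dvd_comb h1 h 1 (-1) (by ring))
      have f2 : ¬ n ∣ (x - j - 1) := fun h => hij (dvd_comb h1 h (-1) 1 (by ring))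
      have f3 : ¬ n ∣ (x - 1 - j) := fun h => hij (dvd_comb h1 h (-1) 1 (by ring))
      have f4 : ¬ n ∣ (x - 1 - j - 1) := fun h => hij1 (dvd_comb h1 h (-1) 1 (by ring))
      rw [gfun_fix f1 f2, gfun_down hn h1, gfun_fix f3 f4]
    · by_cases g0 : n ∣ (x - j)
      · have f3 : ¬ n ∣ (x + 1 - i) := fun h => hij1 (dvd_comb g0 h 1 (-1) (by ring))
        have f4 : ¬ n ∣ (x + 1 - i - 1) := fun h => h0 (dvd_comb h h 1 0 (by ring))
        rw [gfun_up g0, gfun_fix f3 f4, gfun_fix h0 h1, gfun_up g0]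
      · by_cases g1 : n ∣ (x - j - 1)
        · have f3 : ¬ n ∣ (x - 1 - i) := fun h => h1 (dvd_comb h h 1 0 (by ring))
          have f4 : ¬ n ∣ (x - 1 - i - 1) := fun h => hji1 (dvd_comb g1 h (-1) 1 (by ring))
          rw [gfun_down hn g1, gfun_fix f3 f4, gfun_fix h0 h1, gfun_down hn g1]
        · rw [gfun_fix g0 g1, gfun_fix h0 h1, gfun_fix g0 g1]

lemma gfun_braid {n i : ℤ} (hn : 3 ≤ n) (x : ℤ) :
    gfun n i (gfun n (i+1) (gfun n i (gfun n (i+1) (gfun n i (gfun n (i+1) x))))) = x := by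
  have h2 : (2:ℤ) ≤ n := by omega
  by_cases h0 : n ∣ (x - i)
  · have c1 : ¬ n ∣ (x - (i+1)) := not_dvd_near h0 (by omega) (by omega) (by omega)
    have c2 : ¬ n ∣ (x - (i+1) - 1) := not_dvd_near h0 (by omega) (by omega) (by omega)
    have s1 : gfun n (i+1) x = x := gfun_fix c1 c2
    have s2 : gfun n i x = x + 1 := gfun_up h0
    have s3 : gfun n (i+1) (x+1) = x + 2 := by
      rw [gfun_up (dvd_comb h0 h0 1 0 (by ring) : n ∣ x + 1 - (i+1))]; ring
    have e1 : ¬ n ∣ (x + 2 - i) := not_dvd_near h0 (by omega) (by omega) (by omega)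
    have e2 : ¬ n ∣ (x + 2 - i - 1) := not_dvd_near h0 (by omega) (by omega) (by omega)
    have s4 : gfun n i (x+2) = x + 2 := gfun_fix e1 e2
    have s5 : gfun n (i+1) (x+2) = x + 1 := by
      rw [gfun_down h2 (dvd_comb h0 h0 1 0 (by ring) : n ∣ x + 2 - (i+1) - 1)]; ring
    have s6 : gfun n i (x+1) = x := by
      rw [gfun_down h2 (dvd_comb h0 h0 1 0 (by ring) : n ∣ x + 1 - i - 1)]; ring
    simp only [s1, s2, s3, s4, s5, s6]
  · by_cases h1 : n ∣ (x - i - 1)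
    · have s1 : gfun n (i+1) x = x + 1 :=
        gfun_up (dvd_comb h1 h1 1 0 (by ring) : n ∣ x - (i+1))
      have c1 : ¬ n ∣ (x + 1 - i) := not_dvd_near h1 (by omega) (by omega) (by omega)
      have c2 : ¬ n ∣ (x + 1 - i - 1) := not_dvd_near h1 (by omega) (by omega) (by omega)
      have s2 : gfun n i (x+1) = x + 1 := gfun_fix c1 c2
      have s3 : gfun n (i+1) (x+1) = x := by
        rw [gfun_down h2 (dvd_comb h1 h1 1 0 (by ring) : n ∣ x + 1 - (i+1) - 1)]; ring
      have s4 : gfun n i x = x - 1 := gfun_down h2 h1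
      have c3 : ¬ n ∣ (x - 1 - (i+1)) := not_dvd_near h1 (by omega) (by omega) (by omega)
      have c4 : ¬ n ∣ (x - 1 - (i+1) - 1) := not_dvd_near h1 (by omega) (by omega) (by omega)
      have s5 : gfun n (i+1) (x-1) = x - 1 := gfun_fix c3 c4
      have s6 : gfun n i (x-1) = x := by
        rw [gfun_up (dvd_comb h1 h1 1 0 (by ring) : n ∣ x - 1 - i)]; ring
      simp only [s1, s2, s3, s4, s5, s6]
    · by_cases h2' : n ∣ (x - i - 2)
      · have s1 : gfun n (i+1) x = x - 1 :=
          gfun_down h2 (dvd_comb h2' h2' 1 0 (by ring) : n ∣ x - (i+1) - 1)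
        have s2 : gfun n i (x-1) = x - 2 := by
          rw [gfun_down h2 (dvd_comb h2' h2' 1 0 (by ring) : n ∣ x - 1 - i - 1)]; ring
        have c1 : ¬ n ∣ (x - 2 - (i+1)) := not_dvd_near h2' (by omega) (by omega) (by omega)
        have c2 : ¬ n ∣ (x - 2 - (i+1) - 1) := not_dvd_near h2' (by omega) (by omega) (by omega)
        have s3 : gfun n (i+1) (x-2) = x - 2 := gfun_fix c1 c2
        have s4 : gfun n i (x-2) = x - 1 := by
          rw [gfun_up (dvd_comb h2' h2' 1 0 (by ring) : n ∣ x - 2 - i)]; ring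
        have s5 : gfun n (i+1) (x-1) = x := by
          rw [gfun_up (dvd_comb h2' h2' 1 0 (by ring) : n ∣ x - 1 - (i+1))]; ring
        have c3 : ¬ n ∣ (x - i) := not_dvd_near h2' (by omega) (by omega) (by omega)
        have s6 : gfun n i x = x := gfun_fix c3 h1
        simp only [s1, s2, s3, s4, s5, s6]
      · have c1 : ¬ n ∣ (x - (i+1)) := fun h => h1 (dvd_comb h h 1 0 (by ring))
        have c2 : ¬ n ∣ (x - (i+1) - 1) := fun h => h2' (dvd_comb h h 1 0 (by ring))
        have s1 : gfun n (i+1) x = x := gfun_fix c1 c2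
        have s2 : gfun n i x = x := gfun_fix h0 h1
        simp only [s1, s2]

/-- the affine transposition as a permutation of ℤ -/
def gperm (n i : ℤ) (hn : 2 ≤ n) : Equiv.Perm ℤ :=
  ⟨gfun n i, gfun n i, fun x => gfun_invol n i hn x, fun x => gfun_invol n i hn x⟩

@[simp] lemma gperm_apply (n i : ℤ) (hn : 2 ≤ n) (x : ℤ) : gperm n i hn x = gfun n i x := rfl

lemma gperm_congr {n i i' : ℤ} (hn : 2 ≤ n) (h : n ∣ (i - i')) :
    gperm n i hn = gperm n i' hn := by
  ext x; exact gfun_congr h x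

lemma gperm_sq (n i : ℤ) (hn : 2 ≤ n) : gperm n i hn * gperm n i hn = 1 := by
  ext x; exact gfun_invol n i hn x

lemma gperm_braid {n : ℤ} (hn : 3 ≤ n) (i : ℤ) (h2 : 2 ≤ n) :
    (gperm n i h2 * gperm n (i+1) h2) ^ 3 = 1 := by
  ext x
  simp only [pow_succ, pow_zero, one_mul, Equiv.Perm.mul_apply, Equiv.Perm.coe_one, id_eq,
    gperm_apply]
  exact gfun_braid hn x

lemma gperm_braid' {n : ℤ} (hn : 3 ≤ n) {i j : ℤ} (h2 : 2 ≤ n) (h : n ∣ (i - j - 1)) :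
    (gperm n i h2 * gperm n j h2) ^ 3 = 1 := by
  have e : gperm n i h2 = gperm n (j + 1) h2 :=
    gperm_congr h2 (by rw [show i - (j+1) = i - j - 1 by ring]; exact h)
  rw [e]
  set a := gperm n j h2
  set b := gperm n (j+1) h2
  have hb : (a * b) ^ 3 = 1 := gperm_braid hn j h2
  have ha : a * a = 1 := gperm_sq n j h2
  have inv_a : a⁻¹ = a := inv_eq_of_mul_eq_one_right ha
  have hba : b * a = a⁻¹ * (a * b) * a⁻¹⁻¹ := by
    simp only [inv_a]
    rw [← mul_assoc a a b, ha, one_mul]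
  rw [hba, conj_pow, hb, mul_one]
  simp

lemma gperm_comm {n : ℤ} {i j : ℤ} (h2 : 2 ≤ n) (hij : ¬ n ∣ (i - j)) (hij1 : ¬ n ∣ (i - j - 1))
    (hji1 : ¬ n ∣ (j - i - 1)) :
    (gperm n i h2 * gperm n j h2) ^ 2 = 1 := by
  ext x
  simp only [pow_succ, pow_zero, one_mul, Equiv.Perm.mul_apply, Equiv.Perm.coe_one, id_eq,
    gperm_apply]
  rw [gfun_comm h2 hij hij1 hji1, gfun_invol n i h2, gfun_invol n j h2]

/- ediv lemmas -/
lemma ediv_succ {n d : ℤ} (hn : 0 < n) (h : ¬ n ∣ d + 1) : (d + 1) / n = d / n := by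
  have h1 : 0 ≤ d % n := Int.emod_nonneg d (by omega)
  have h2 : d % n < n := Int.emod_lt_of_pos d hn
  have h3 : n * (d / n) + d % n = d := Int.mul_ediv_add_emod d n
  have h4 : d % n + 1 < n := by
    rcases eq_or_lt_of_le (by omega : d % n + 1 ≤ n) with he | hlt
    · exfalso; exact h ⟨d / n + 1, by rw [mul_add, mul_one]; omega⟩
    · exact hlt
  exact ((Int.ediv_emod_unique (a := d + 1) (b := n) (q := d / n) (r := d % n + 1) hn).mpr
    ⟨by omega, by omega, by omega⟩).1

lemma ediv_pred {n d : ℤ} (hn : 0 < n) (h : ¬ n ∣ d) : (d - 1) / n = d / n := by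
  have := ediv_succ hn (d := d - 1) (by rw [show d - 1 + 1 = d by ring]; exact h)
  rw [show d - 1 + 1 = d by ring] at this
  exact this.symm

lemma neg_one_ediv {n : ℤ} (hn : 0 < n) : (-1 : ℤ) / n = -1 :=
  ((Int.ediv_emod_unique (a := -1) (b := n) (q := -1) (r := n - 1) hn).mpr
    ⟨by rw [mul_neg, mul_one]; omega, by omega, by omega⟩).1

/-- `gfun n j` preserves the `i`-interval index when `j ≢ i mod n`. -/
lemma gfun_idx {n i j x : ℤ} (hn : 2 ≤ n) (hij : ¬ n ∣ (j - i)) :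
    (gfun n j x - i - 1) / n = (x - i - 1) / n := by
  by_cases h0 : n ∣ x - j
  · rw [gfun_up h0, show x + 1 - i - 1 = (x - i - 1) + 1 by ring]
    refine ediv_succ (by omega) ?_
    rw [show x - i - 1 + 1 = x - i by ring]
    exact fun h => hij (dvd_comb h h0 1 (-1) (by ring))
  · by_cases h1 : n ∣ x - j - 1
    · rw [gfun_down hn h1, show x - 1 - i - 1 = (x - i - 1) - 1 by ring]
      refine ediv_pred (by omega) ?_
      exact fun h => hij (dvd_comb h h1 1 (-1) (by ring))
    · rw [gfun_fix h0 h1]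

variable {k : ℕ}

lemma affCM_apply (hk : 2 ≤ k) (i j : Fin (k+1)) :
    affCM k hk i j = if i = j then 1 else if i = j + 1 ∨ j = i + 1 then 3 else 2 := rfl

lemma fin_val_add_one (hk : 2 ≤ k) (j : Fin (k+1)) :
    ((j + 1 : Fin (k+1)) : ℕ) = ((j : ℕ) + 1) % (k + 1) := by
  rw [Fin.val_add, Fin.val_one']
  congr 1
  rw [Nat.mod_eq_of_lt (by omega)]

lemma fin_eq_add_one_iff (hk : 2 ≤ k) (i j : Fin (k+1)) :
    i = j + 1 ↔ ((k:ℤ)+1) ∣ ((i:ℤ) - (j:ℤ) - 1) := by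
  have hi := i.isLt
  have hj := j.isLt
  constructor
  · intro h
    subst h
    rw [fin_val_add_one hk j] at *
    by_cases hlt : (j:ℕ) + 1 < k + 1
    · refine ⟨0, ?_⟩
      have : (((j:ℕ) + 1) % (k+1)) = (j:ℕ) + 1 := Nat.mod_eq_of_lt hlt
      push_cast [this]
      ring
    · have hjk : (j:ℕ) = k := by omega
      refine ⟨-1, ?_⟩
      have : (((j:ℕ) + 1) % (k+1)) = 0 := by rw [hjk]; simp
      push_cast [this]
      rw [hjk]
      push_cast
      ring
  · intro hd
    have hb1 : ((i:ℤ) - j - 1) ≤ (k:ℤ) - 1 := by omega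
    have hb2 : -((k:ℤ)+1) ≤ (i:ℤ) - j - 1 := by omega
    by_cases hc : (i:ℤ) - j - 1 = -((k:ℤ)+1)
    · have hi0 : (i:ℕ) = 0 := by omega
      have hjk : (j:ℕ) = k := by omega
      apply Fin.ext
      rw [fin_val_add_one hk j, hi0, hjk]
      simp
    · have h0 : (i:ℤ) - j - 1 = 0 := dvd_small (by omega) hd (by omega) (by omega)
      apply Fin.ext
      rw [fin_val_add_one hk j, Nat.mod_eq_of_lt (by omega)]
      omega

lemma fin_ne_dvd (hk : 2 ≤ k) {i j : Fin (k+1)} (h : i ≠ j) :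
    ¬ ((k:ℤ)+1) ∣ ((i:ℤ) - (j:ℤ)) := by
  intro hd
  have hi := i.isLt
  have hj := j.isLt
  have h0 : (i:ℤ) - j = 0 := dvd_small (by omega) hd (by omega) (by omega)
  exact h (Fin.ext (by omega))

lemma two_le_n (hk : 2 ≤ k) : (2:ℤ) ≤ (k:ℤ) + 1 := by omega

/-- generators of the affine permutation representation -/
def fgen (hk : 2 ≤ k) (i : Fin (k+1)) : Equiv.Perm ℤ :=
  gperm ((k:ℤ)+1) (i:ℤ) (two_le_n hk)

lemma fgen_liftable (hk : 2 ≤ k) : CoxeterMatrix.IsLiftable (affCM k hk) (fgen hk) := by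
  intro i j
  have hn3 : (3:ℤ) ≤ (k:ℤ)+1 := by omega
  rw [affCM_apply hk i j]
  split_ifs with h1 h2
  · subst h1
    rw [pow_one]
    exact gperm_sq _ _ _
  · rcases h2 with hij | hji
    · exact gperm_braid' hn3 _ ((fin_eq_add_one_iff hk i j).1 hij)
    · have hd : ((k:ℤ)+1) ∣ ((j:ℤ) - ((i:ℤ) + 1)) := by
        have := (fin_eq_add_one_iff hk j i).1 hji
        convert this using 1
        ring
      have e : fgen hk j = gperm ((k:ℤ)+1) ((i:ℤ)+1) (two_le_n hk) :=
        gperm_congr (two_le_n hk) hd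
      rw [show fgen hk j = _ from e]
      exact gperm_braid hn3 (i:ℤ) (two_le_n hk)
  · push_neg at h2
    exact gperm_comm (two_le_n hk) (fin_ne_dvd hk h1)
      (fun hd => h2.1 ((fin_eq_add_one_iff hk i j).2 hd))
      (fun hd => h2.2 ((fin_eq_add_one_iff hk j i).2 hd))

variable (hk : 2 ≤ k) (cs : CoxeterSystem (affCM k hk) ((affCM k hk).Group))

/-- the affine permutation representation -/
def phi : (affCM k hk).Group →* Equiv.Perm ℤ := cs.lift ⟨fgen hk, fgen_liftable hk⟩

lemma phi_simple (i : Fin (k+1)) : phi hk cs (cs.simple i) = fgen hk i :=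
  cs.lift_apply_simple (fgen_liftable hk) i

/-- the interval-index invariant -/
def Pidx (i : Fin (k+1)) (g : Equiv.Perm ℤ) : Prop :=
  ∀ x : ℤ, (g x - (i:ℤ) - 1) / ((k:ℤ)+1) = (x - (i:ℤ) - 1) / ((k:ℤ)+1)

lemma Pidx_fgen {i j : Fin (k+1)} (h : j ≠ i) : Pidx i (fgen hk j) := by
  intro x
  exact gfun_idx (two_le_n hk) (fin_ne_dvd hk h)

lemma Pidx_mul {i : Fin (k+1)} {g h : Equiv.Perm ℤ} (hg : Pidx i g) (hh : Pidx i h) :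
    Pidx i (g * h) := by
  intro x
  rw [Equiv.Perm.mul_apply, hg (h x), hh x]

lemma Pidx_word {ω : List (Fin (k+1))} {i : Fin (k+1)} (hi : i ∉ ω) :
    Pidx i (phi hk cs (cs.wordProd ω)) := by
  induction ω with
  | nil =>
    rw [cs.wordProd_nil, map_one]
    intro x; rfl
  | cons a ω ih =>
    rw [cs.wordProd_cons, map_mul, phi_simple]
    exact Pidx_mul (Pidx_fgen hk (fun h => hi (h ▸ (List.mem_cons_self (a := a) (l := ω)))))
      (ih (fun h => hi (List.mem_cons_of_mem a h)))

lemma support_mem {l ω : List (Fin (k+1))} (hl : l.Nodup)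
    (heq : cs.wordProd ω = cs.wordProd l) {i : Fin (k+1)} (hi : i ∈ l) : i ∈ ω := by
  by_contra hno
  have hP : Pidx i (phi hk cs (cs.wordProd l)) := heq ▸ Pidx_word hk cs hno
  obtain ⟨l₁, l₂, rfl⟩ := List.append_of_mem hi
  have hnd := hl
  rw [List.nodup_append] at hnd
  have hi1 : i ∉ l₁ := fun h => hnd.2.2 i h i List.mem_cons_self rfl
  have hi2 : i ∉ l₂ := by
    have := hnd.2.1
    rw [List.nodup_cons] at this
    exact this.1
  have h1 : Pidx i (phi hk cs (cs.wordProd l₁)) := Pidx_word hk cs hi1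
  have h2 : Pidx i (phi hk cs (cs.wordProd l₂)) := Pidx_word hk cs hi2
  rw [cs.wordProd_append, cs.wordProd_cons, map_mul, map_mul, phi_simple] at hP
  set n : ℤ := (k:ℤ)+1 with hn
  set b := phi hk cs (cs.wordProd l₂) with hb
  have key := hP (b⁻¹ (i:ℤ))
  rw [Equiv.Perm.mul_apply, Equiv.Perm.mul_apply, (show b (b⁻¹ (i:ℤ)) = i from Equiv.apply_symm_apply b (i:ℤ))] at key
  have hgi : (fgen hk i) (i:ℤ) = (i:ℤ) + 1 := gfun_up (by simp)
  rw [hgi, h1 ((i:ℤ)+1)] at key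
  have hrhs : (b⁻¹ (i:ℤ) - (i:ℤ) - 1) / n = -1 := by
    have := h2 (b⁻¹ (i:ℤ))
    rw [(show b (b⁻¹ (i:ℤ)) = i from Equiv.apply_symm_apply b (i:ℤ))] at this
    rw [← this]
    norm_num
    exact neg_one_ediv (by omega)
  rw [hrhs] at key
  norm_num at key

lemma nodup_isReduced {l : List (Fin (k+1))} (hl : l.Nodup) : cs.IsReduced l := by
  have hle := cs.length_wordProd_le l
  obtain ⟨ω, hlen, hW⟩ := cs.exists_reduced_word (cs.wordProd l)
  have hsub : ∀ i ∈ l, i ∈ ω := fun i hi => support_mem hk cs hl hW.symm hi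
  have h1 : l.toFinset ⊆ ω.toFinset := fun i hi =>
    List.mem_toFinset.2 (hsub i (List.mem_toFinset.1 hi))
  have h2 : l.length ≤ ω.length :=
    calc l.length = l.toFinset.card := (List.toFinset_card_of_nodup hl).symm
    _ ≤ ω.toFinset.card := Finset.card_le_card h1
    _ ≤ ω.length := ω.toFinset_card_le
  have hlen2 : cs.length (cs.wordProd l) = ω.length := by rw [hW]; exact hlen
  unfold CoxeterSystem.IsReduced
  omega

lemma simple_comm {a b : Fin (k+1)} (hab : a ≠ b) (h1 : a ≠ b + 1) (h2 : b ≠ a + 1) :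
    cs.simple a * cs.simple b = cs.simple b * cs.simple a := by
  have hM : affCM k hk a b = 2 := by
    rw [affCM_apply hk a b, if_neg hab, if_neg (by tauto)]
  have hp := cs.simple_mul_simple_pow a b
  rw [hM, pow_two] at hp
  have : cs.simple a * cs.simple b = (cs.simple a * cs.simple b)⁻¹ :=
    eq_inv_of_mul_eq_one_left hp
  rw [this, mul_inv_rev, cs.inv_simple, cs.inv_simple]

lemma one_ne_zero_fin (hk : 2 ≤ k) : (1 : Fin (k+1)) ≠ 0 := by
  intro h
  have := congrArg Fin.val h
  rw [Fin.val_one', Fin.val_zero, Nat.mod_eq_of_lt (by omega)] at this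
  omega

lemma succ_ne_self_fin (hk : 2 ≤ k) (m : Fin (k+1)) : m + 1 ≠ m := by
  intro h
  have : (1 : Fin (k+1)) = 0 := by
    have := congrArg (fun z => z - m) h
    simpa only [add_sub_cancel_left, sub_self] using this
  exact one_ne_zero_fin hk this

lemma pairwise_of_indexOf {l : List (Fin (k+1))} (hl : l.Nodup)
    (h : ∀ m : Fin (k+1), m ∈ l → m + 1 ∈ l → l.idxOf (m + 1) < l.idxOf m) :
    l.Pairwise (fun a b => b ≠ a + 1) := by
  rw [List.pairwise_iff_getElem]
  intro i j hi hj hij he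
  have hm : l[i] ∈ l := List.getElem_mem hi
  have hm1 : l[i] + 1 ∈ l := he ▸ List.getElem_mem hj
  have := h l[i] hm hm1
  rw [← he] at this
  rw [List.Nodup.idxOf_getElem hl i hi, List.Nodup.idxOf_getElem hl j hj] at this
  omega

lemma indexOf_of_pairwise (hk : 2 ≤ k) {l : List (Fin (k+1))} (hl : l.Nodup)
    (hp : l.Pairwise (fun a b => b ≠ a + 1)) :
    ∀ m : Fin (k+1), m ∈ l → m + 1 ∈ l → l.idxOf (m + 1) < l.idxOf m := by
  intro m hm hm1
  have hpm : l.idxOf m < l.length := List.idxOf_lt_length_iff.2 hm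
  have hpm1 : l.idxOf (m+1) < l.length := List.idxOf_lt_length_iff.2 hm1
  have hne : l.idxOf (m+1) ≠ l.idxOf m := by
    intro h
    have : l[l.idxOf (m+1)] = l[l.idxOf m] := by congr 1
    rw [List.getElem_idxOf hpm1, List.getElem_idxOf hpm] at this
    exact succ_ne_self_fin hk m this
  rcases lt_or_gt_of_ne hne with h | h
  · exact h
  · exfalso
    have := (List.pairwise_iff_getElem.1 hp) _ _ hpm hpm1 h
    rw [List.getElem_idxOf hpm1, List.getElem_idxOf hpm] at this
    exact this rfl

variable (hk : 2 ≤ k) (cs : CoxeterSystem (affCM k hk) ((affCM k hk).Group))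

lemma wordProd_comm {w : (affCM k hk).Group} (l₁ : List (Fin (k+1)))
    (h : ∀ b ∈ l₁, cs.simple b * w = w * cs.simple b) :
    cs.wordProd l₁ * w = w * cs.wordProd l₁ := by
  induction l₁ with
  | nil => simp
  | cons b t ih =>
    rw [cs.wordProd_cons, mul_assoc, ih (fun x hx => h x (List.mem_cons_of_mem b hx)),
      ← mul_assoc, h b List.mem_cons_self, mul_assoc]

lemma prod_eq_of_valid : ∀ (l' l : List (Fin (k+1))), l.Nodup → l'.Nodup →
    l.Pairwise (fun a b => b ≠ a + 1) → l'.Pairwise (fun a b => b ≠ a + 1) →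
    (∀ x, x ∈ l ↔ x ∈ l') → cs.wordProd l = cs.wordProd l' := by
  intro l'
  induction l' with
  | nil =>
    intro l _ _ _ _ hmem
    have : l = [] := List.eq_nil_iff_forall_not_mem.2 (fun x hx => by simpa using (hmem x).1 hx)
    rw [this]
  | cons a t' ih =>
    intro l hl hl' hp hp' hmem
    have ha : a ∈ l := (hmem a).2 List.mem_cons_self
    obtain ⟨l₁, l₂, rfl⟩ := List.append_of_mem ha
    have hnd := hl
    rw [List.nodup_append] at hnd
    have ha1 : a ∉ l₁ := fun h => hnd.2.2 a h a List.mem_cons_self rfl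
    have ha2 : a ∉ l₂ := ((List.nodup_cons.1 hnd.2.1)).1
    have hat' : a ∉ t' := (List.nodup_cons.1 hl').1
    have hcomm : ∀ b ∈ l₁, cs.simple b * cs.simple a = cs.simple a * cs.simple b := by
      intro b hb
      have hba : b ≠ a := fun h => ha1 (h ▸ hb)
      have h1 : a ≠ b + 1 := by
        have := (List.pairwise_append.1 hp).2.2 b hb a List.mem_cons_self
        exact this
      have h2 : b ≠ a + 1 := by
        intro h
        have hbl : b ∈ a :: t' := (hmem b).1 (List.mem_append.2 (Or.inl hb))
        have hbt' : b ∈ t' := by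
          rcases List.mem_cons.1 hbl with h' | h'
          · exact absurd h' hba
          · exact h'
        have := (List.pairwise_cons.1 hp').1 b hbt'
        exact this h
      exact simple_comm hk cs hba h2 h1
    have key : cs.wordProd (l₁ ++ a :: l₂) = cs.simple a * cs.wordProd (l₁ ++ l₂) := by
      rw [cs.wordProd_append, cs.wordProd_cons, cs.wordProd_append, ← mul_assoc,
        wordProd_comm hk cs l₁ hcomm, mul_assoc]
    rw [key, cs.wordProd_cons]
    congr 1
    have hsub : (l₁ ++ l₂).Sublist (l₁ ++ a :: l₂) :=
      List.Sublist.append_left (List.sublist_cons_self a l₂) l₁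
    refine ih (l₁ ++ l₂) (hl.sublist hsub) (List.nodup_cons.1 hl').2
      (hp.sublist hsub) (List.pairwise_cons.1 hp').2 ?_
    intro x
    constructor
    · intro hx
      have hxa : x ≠ a := by
        rcases List.mem_append.1 hx with h | h
        · exact fun he => ha1 (he ▸ h)
        · exact fun he => ha2 (he ▸ h)
      have : x ∈ a :: t' := (hmem x).1 (by
        rcases List.mem_append.1 hx with h | h
        · exact List.mem_append.2 (Or.inl h)
        · exact List.mem_append.2 (Or.inr (List.mem_cons_of_mem a h)))
      rcases List.mem_cons.1 this with h | h
      · exact absurd h hxa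
      · exact h
    · intro hx
      have hxa : x ≠ a := fun he => hat' (he ▸ hx)
      have : x ∈ l₁ ++ a :: l₂ := (hmem x).2 (List.mem_cons_of_mem a hx)
      rcases List.mem_append.1 this with h | h
      · exact List.mem_append.2 (Or.inl h)
      · rcases List.mem_cons.1 h with h' | h'
        · exact absurd h' hxa
        · exact List.mem_append.2 (Or.inr h')

lemma exists_valid_list {k : ℕ} (hk : 2 ≤ k) (D : Finset (Fin (k+1))) {c : Fin (k+1)}
    (hc : c ∉ D) :
    ∃ l : List (Fin (k+1)), l.Nodup ∧ l.Pairwise (fun a b => b ≠ a + 1) ∧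
      (∀ i, i ∈ l ↔ i ∈ D) := by
  classical
  set f : Fin (k+1) → Fin (k+1) := fun j => c - 1 - j with hf
  have hinj : Function.Injective f := sub_right_injective
  set lfull : List (Fin (k+1)) := List.ofFn f with hlf
  have hndfull : lfull.Nodup := List.nodup_ofFn.2 hinj
  have hmemfull : ∀ i : Fin (k+1), i ∈ lfull := by
    intro i
    rw [hlf, List.mem_ofFn]
    exact ⟨c - 1 - i, sub_sub_cancel _ _⟩
  have hpfull : lfull.Pairwise (fun a b => b = c ∨ b ≠ a + 1) := by
    rw [hlf, List.pairwise_ofFn]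
    intro i j hij
    by_cases heq : f j = f i + 1
    · left
      -- derive i = j + 1
      have hfji : f i = f j - 1 := eq_sub_of_add_eq heq.symm
      have h2 : i = j + 1 := hinj (by
        show c - 1 - i = c - 1 - (j + 1)
        have : c - 1 - i = (c - 1 - j) - 1 := hfji
        rw [this]; abel)
      have h3 : (i : ℕ) = ((j : ℕ) + 1) % (k + 1) := by rw [h2]; exact fin_val_add_one hk j
      have hjlt := j.isLt
      by_cases h4 : (j : ℕ) + 1 < k + 1
      · exfalso
        rw [Nat.mod_eq_of_lt h4] at h3
        have hlt : (i : ℕ) < (j : ℕ) := hij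
        omega
      · have hj0 : (i : ℕ) = 0 := by
          have : (j : ℕ) = k := by omega
          rw [h3, this]; simp
        have hi0 : i = 0 := Fin.ext hj0
        have hj1 : j + 1 = 0 := by rw [← h2, hi0]
        have hj2 : j = 0 - 1 := eq_sub_of_add_eq hj1
        show c - 1 - j = c
        rw [hj2]
        abel
    · right
      exact heq
  refine ⟨lfull.filter (· ∈ D), hndfull.filter _, ?_, ?_⟩
  · refine List.Pairwise.imp_of_mem ?_ (hpfull.filter _)
    intro a b _ hb h
    rcases h with h | h
    · exfalso
      have := (List.mem_filter.1 hb).2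
      simp only [decide_eq_true_eq] at this
      exact hc (h ▸ this)
    · exact h
  · intro i
    rw [List.mem_filter]
    simp [hmemfull i]

end Stmt17Aux

/-- `w` is cyclically decreasing with support exactly `D`: it has a reduced word `l` in
which each letter occurs at most once, whenever `m` and `m+1` both occur `m+1` precedes
`m`, and whose set of letters is `D`. -/
def IsCyclicallyDecreasingOn (k : ℕ) (hk : 2 ≤ k)
    (cs : CoxeterSystem (affCM k hk) ((affCM k hk).Group))
    (D : Finset (Fin (k + 1))) (w : (affCM k hk).Group) : Prop :=
  ∃ l : List (Fin (k + 1)),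
    cs.wordProd l = w ∧ cs.IsReduced l ∧ l.Nodup ∧
    (∀ m : Fin (k + 1), m ∈ l → m + 1 ∈ l → l.idxOf (m + 1) < l.idxOf m) ∧
    (∀ i : Fin (k + 1), i ∈ l ↔ i ∈ D)

theorem stmt17 (k : ℕ) (hk : 2 ≤ k)
    (cs : CoxeterSystem (affCM k hk) ((affCM k hk).Group))
    (hcs : cs = (affCM k hk).toCoxeterSystem)
    (D : Finset (Fin (k + 1))) (hD : D ≠ Finset.univ) :
    (∃! w : (affCM k hk).Group, IsCyclicallyDecreasingOn k hk cs D w) ∧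
    (∀ w : (affCM k hk).Group,
      IsCyclicallyDecreasingOn k hk cs D w → cs.length w = D.card) := by
  classical
  obtain ⟨c, hc⟩ : ∃ c, c ∉ D := by
    by_contra h
    push_neg at h
    exact hD (Finset.eq_univ_iff_forall.2 h)
  obtain ⟨l₀, hnd₀, hp₀, hm₀⟩ := Stmt17Aux.exists_valid_list hk D hc
  have hred₀ : cs.IsReduced l₀ := Stmt17Aux.nodup_isReduced hk cs hnd₀
  have hcyc₀ : IsCyclicallyDecreasingOn k hk cs D (cs.wordProd l₀) :=
    ⟨l₀, rfl, hred₀, hnd₀, Stmt17Aux.indexOf_of_pairwise hk hnd₀ hp₀, hm₀⟩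
  refine ⟨⟨cs.wordProd l₀, hcyc₀, ?_⟩, ?_⟩
  · rintro w ⟨l, hwl, hred, hnd, hidx, hmem⟩
    have hp := Stmt17Aux.pairwise_of_indexOf hnd hidx
    rw [← hwl]
    exact Stmt17Aux.prod_eq_of_valid hk cs l₀ l hnd hnd₀ hp hp₀
      (fun x => (hmem x).trans (hm₀ x).symm)
  · rintro w ⟨l, hwl, hred, hnd, hidx, hmem⟩
    have hfin : l.toFinset = D := Finset.ext (fun i => by rw [List.mem_toFinset]; exact hmem i)
    have hlen : cs.length (cs.wordProd l) = l.length := hred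
    rw [← hwl, hlen, ← List.toFinset_card_of_nodup hnd, hfin]
end
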